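/- In the disordered ferromagnet on the hexagonal lattice ℍ with couplings satisfying J_{x,y} ∈ [0,1] for every edge and external field h > 1.5: for every initial configuration, every legal flip sequence, and every site x, the spin at x is flipped at most 7 times during the sequence. -/

import Mathlib

open MeasureTheory ENNReal

/-- Sites of the hexagonal (honeycomb) lattice ℍ, coordinatized by ℤ × ℤ. -/
abbrev Site : Type := ℤ × ℤ

/-- A spin configuration: `true` stands for spin +1, `false` for spin −1. -/
abbrev Config : Type := Site → Bool

/-- The three neighbors of a site: `(i,j)` is adjacent to `(i−1,j)`, `(i+1,j)`, and to
`(i,j+1)` if `i+j` is even, to `(i,j−1)` if `i+j` is odd. -/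
def nbrs (x : Site) : List Site :=
  [(x.1 - 1, x.2), (x.1 + 1, x.2),
   if Even (x.1 + x.2) then (x.1, x.2 + 1) else (x.1, x.2 - 1)]

/-- Adjacency in the hexagonal lattice. -/
def Adj (x y : Site) : Prop := y ∈ nbrs x

instance : DecidableRel Adj := fun x y => by unfold Adj; infer_instance

/-- The spin value of a site as a real number: `true` ↦ +1, `false` ↦ −1. -/
def val (b : Bool) : ℝ := if b then 1 else -1

/-- The energy change of a flip at `x` for the Hamiltonian with couplings `J` and external
field `h`:  ΔH_x(σ) = 2 Σ_{y∈N(x)} J_{x,y} σ_x σ_y + 2 h σ_x. -/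
def deltaH (J : Site → Site → ℝ) (h : ℝ) (σ : Config) (x : Site) : ℝ :=
  2 * ((nbrs x).map (fun y => J x y * val (σ x) * val (σ y))).sum + 2 * h * val (σ x)

/-- Flipping at `x` is legal in the disordered model iff it strictly lowers the energy. -/
def LegalDis (J : Site → Site → ℝ) (h : ℝ) (σ : Config) (x : Site) : Prop :=
  deltaH J h σ x < 0

/-- The configuration obtained from `σ` by flipping the spin at `x`. -/
def flipAt (σ : Config) (x : Site) : Config := Function.update σ x (!(σ x))

/-- `η 0, η 1, …` is a legal flip sequence of the zero-temperature dynamics of the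
disordered model, of length `m ∈ ℕ∞` (`m = ⊤` for an infinite sequence): each configuration
is obtained from the previous one by a single legal flip. -/
def IsLegalFlipSeqDis (J : Site → Site → ℝ) (h : ℝ) (η : ℕ → Config) (m : ℕ∞) : Prop :=
  ∀ n : ℕ, (n : ℕ∞) + 1 ≤ m → ∃ x, LegalDis J h (η n) x ∧ η (n + 1) = flipAt (η n) x

namespace Stmt5Aux

lemma nbrs_eq (z : Site) : nbrs z = [(z.1 - 1, z.2), (z.1 + 1, z.2),
    if Even (z.1 + z.2) then (z.1, z.2 + 1) else (z.1, z.2 - 1)] := rfl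

lemma mem_nbrs_symm {x y : Site} (hy : y ∈ nbrs x) : x ∈ nbrs y := by
  obtain ⟨i, j⟩ := x; obtain ⟨a, b⟩ := y
  by_cases h1 : Even (i + j) <;> by_cases h2 : Even (a + b) <;>
    simp only [nbrs, List.mem_cons, List.not_mem_nil, or_false, h1, h2, if_true, if_false,
      Prod.mk.injEq] at hy ⊢ <;>
    rw [Int.even_iff] at * <;> omega

lemma self_not_mem_nbrs (x : Site) : x ∉ nbrs x := by
  obtain ⟨i, j⟩ := x
  by_cases h1 : Even (i + j) <;>
    simp only [nbrs, List.mem_cons, List.not_mem_nil, or_false, h1, if_true, if_false,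
      Prod.mk.injEq] <;> omega

lemma val_true : val true = 1 := rfl
lemma val_false : val false = -1 := rfl

lemma term_bounds {j : ℝ} (h0 : 0 ≤ j) (b : Bool) : -j ≤ j * val b ∧ j * val b ≤ j := by
  refine ⟨?_, ?_⟩ <;> cases b <;> simp [val] <;> linarith

def Ssum (J : Site → Site → ℝ) (σ : Config) (z : Site) : ℝ :=
  ((nbrs z).map (fun u => J z u * val (σ u))).sum

lemma deltaH_eq (J : Site → Site → ℝ) (h : ℝ) (σ : Config) (z : Site) :
    deltaH J h σ z = 2 * val (σ z) * (Ssum J σ z + h) := by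
  simp only [deltaH, Ssum, nbrs, List.map_cons, List.map_nil, List.sum_cons, List.sum_nil,
    add_zero]
  ring

lemma legal_S_lt {J : Site → Site → ℝ} {h : ℝ} {σ : Config} {z : Site}
    (hz : σ z = true) (hl : LegalDis J h σ z) : Ssum J σ z < -h := by
  have := hl
  rw [LegalDis, deltaH_eq, hz, val_true] at this
  linarith

lemma legal_S_gt {J : Site → Site → ℝ} {h : ℝ} {σ : Config} {z : Site}
    (hz : σ z = false) (hl : LegalDis J h σ z) : -h < Ssum J σ z := by
  have := hl
  rw [LegalDis, deltaH_eq, hz, val_false] at this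
  linarith

lemma Ssum_perm {J : Site → Site → ℝ} {σ : Config} {z u v w : Site}
    (hp : (nbrs z).Perm [u, v, w]) :
    Ssum J σ z = J z u * val (σ u) + J z v * val (σ v) + J z w * val (σ w) := by
  have h := (hp.map (fun t => J z t * val (σ t))).sum_eq
  simp only [List.map_cons, List.map_nil, List.sum_cons, List.sum_nil, add_zero] at h
  rw [Ssum, h]; ring

lemma exists_perm_of_mem {z u : Site} (hu : u ∈ nbrs z) :
    ∃ v w, (nbrs z).Perm [u, v, w] := by
  set A := ((z.1 - 1 : ℤ), z.2) with hA
  set B := ((z.1 + 1 : ℤ), z.2) with hB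
  set C := (if Even (z.1 + z.2) then ((z.1 : ℤ), z.2 + 1) else ((z.1 : ℤ), z.2 - 1)) with hC
  have hl : nbrs z = [A, B, C] := rfl
  rw [hl] at hu
  simp only [List.mem_cons, List.not_mem_nil, or_false] at hu
  rcases hu with rfl | rfl | rfl
  · exact ⟨B, C, by rw [hl]⟩
  · exact ⟨A, C, by rw [hl]; exact List.Perm.swap B A [C]⟩
  · refine ⟨A, B, ?_⟩
    rw [hl]
    exact ((List.Perm.cons A (List.Perm.swap C B [])).trans (List.Perm.swap C A [B]))


lemma flipAt_same (σ : Config) (z : Site) : flipAt σ z z = !(σ z) := by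
  simp [flipAt]

lemma flipAt_other (σ : Config) (z u : Site) (hu : u ≠ z) : flipAt σ z u = σ u := by
  simp [flipAt, Function.update_of_ne hu]

lemma flip_site {η : ℕ → Config} {n : ℕ} {z u : Site}
    (he : η (n+1) = flipAt (η n) z) (hu : η (n+1) u ≠ η n u) : u = z := by
  by_contra hne
  exact hu (by rw [he, flipAt_other _ _ _ hne])

lemma not_not_flip (b : Bool) : (!b) ≠ b := by cases b <;> simp

lemma persist {η : ℕ → Config} (u : Site) (a : ℕ) :
    ∀ b, a ≤ b → (∀ k, a ≤ k → k < b → η (k+1) u = η k u) → η b u = η a u := by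
  intro b hab
  induction b, hab using Nat.le_induction with
  | base => intro _; rfl
  | succ k hk ih =>
    intro hno
    rw [hno k hk (by omega)]
    exact ih (fun j hj hjk => hno j hj (by omega))

section Main

variable {J : Site → Site → ℝ} {h : ℝ}

lemma cflip_structure (hJ : ∀ a b : Site, Adj a b → J a b ∈ Set.Icc (0:ℝ) 1) (hh : 1.5 < h)
    {σ : Config} {z x0 : Site} (hl : LegalDis J h σ z) (hz : σ z = true)
    (hx0 : x0 ∈ nbrs z) (hx0t : σ x0 = true) :
    ∃ y1 y2, (nbrs z).Perm [x0, y1, y2] ∧ σ y1 = false ∧ σ y2 = false ∧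
      h + J z x0 < J z y1 + J z y2 := by
  have hS := legal_S_lt hz hl
  obtain ⟨v, w, hp⟩ := exists_perm_of_mem hx0
  refine ⟨v, w, hp, ?_⟩
  have hvm : v ∈ nbrs z := hp.mem_iff.mpr (by simp)
  have hwm : w ∈ nbrs z := hp.mem_iff.mpr (by simp)
  have hJ0 := hJ z x0 hx0
  have hJv := hJ z v hvm
  have hJw := hJ z w hwm
  rw [Ssum_perm hp, hx0t, val_true, mul_one] at hS
  rcases hJ0 with ⟨hJ00, hJ01⟩; rcases hJv with ⟨hJv0, hJv1⟩; rcases hJw with ⟨hJw0, hJw1⟩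
  cases hv : σ v <;> cases hw : σ w <;> rw [hv, hw] at hS <;>
    simp only [val_true, val_false, mul_one, mul_neg_one] at hS
  · refine ⟨rfl, rfl, by linarith⟩
  · exfalso; linarith
  · exfalso; linarith
  · exfalso; linarith

lemma Ssum_ge_of_true_nbr (hJ : ∀ a b : Site, Adj a b → J a b ∈ Set.Icc (0:ℝ) 1)
    {σ : Config} {y z : Site} (hzy : z ∈ nbrs y) (hzt : σ z = true) :
    J y z - 2 ≤ Ssum J σ y := by
  obtain ⟨v, w, hp⟩ := exists_perm_of_mem hzy
  have hvm : v ∈ nbrs y := hp.mem_iff.mpr (by simp)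
  have hwm : w ∈ nbrs y := hp.mem_iff.mpr (by simp)
  have hJv := hJ y v hvm
  have hJw := hJ y w hwm
  have hv := (term_bounds hJv.1 (σ v)).1
  have hw := (term_bounds hJw.1 (σ w)).1
  rw [Ssum_perm hp, hzt, val_true, mul_one]
  linarith [hJv.2, hJw.2]

lemma Ssum_congr {σ τ : Config} {x : Site} (hx : ∀ u ∈ nbrs x, τ u = σ u) :
    Ssum J τ x = Ssum J σ x := by
  unfold Ssum
  congr 1
  exact List.map_congr_left (fun u hu => by rw [hx u hu])

lemma Ssum_flip_mono (hJ : ∀ a b : Site, Adj a b → J a b ∈ Set.Icc (0:ℝ) 1)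
    {σ : Config} {x u : Site} (hu : σ u = false) :
    Ssum J σ x ≤ Ssum J (flipAt σ u) x := by
  unfold Ssum
  apply List.sum_le_sum
  intro v hv
  by_cases hvu : v = u
  · subst hvu
    rw [flipAt_same, hu]
    simp only [Bool.not_false, val_true, val_false, mul_one, mul_neg_one]
    linarith [(hJ x v hv).1]
  · rw [flipAt_other _ _ _ hvu]

lemma exists_heavy (hJ : ∀ a b : Site, Adj a b → J a b ∈ Set.Icc (0:ℝ) 1) (hh : 1.5 < h)
    {σ : Config} {x : Site} (hS : Ssum J σ x < -h) :
    ∃ y ∈ nbrs x, 1/2 < J x y := by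
  by_contra hcon
  push_neg at hcon
  set A := ((x.1 - 1 : ℤ), x.2) with hA
  set B := ((x.1 + 1 : ℤ), x.2) with hB
  set C := (if Even (x.1 + x.2) then ((x.1 : ℤ), x.2 + 1) else ((x.1 : ℤ), x.2 - 1)) with hC
  have hl : nbrs x = [A, B, C] := rfl
  have hp : (nbrs x).Perm [A, B, C] := by rw [hl]
  have hAm : A ∈ nbrs x := by rw [hl]; simp
  have hBm : B ∈ nbrs x := by rw [hl]; simp
  have hCm : C ∈ nbrs x := by rw [hl]; simp
  have h1 := (term_bounds (hJ x A hAm).1 (σ A)).1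
  have h2 := (term_bounds (hJ x B hBm).1 (σ B)).1
  have h3 := (term_bounds (hJ x C hCm).1 (σ C)).1
  rw [Ssum_perm hp] at hS
  linarith [hcon A hAm, hcon B hBm, hcon C hCm]


variable {η : ℕ → Config} {m : ℕ∞}

lemma cast_step_le {k n : ℕ} (hkn : k ≤ n) (hm : (n : ℕ∞) + 1 ≤ m) :
    (k : ℕ∞) + 1 ≤ m :=
  le_trans (add_le_add_left (Nat.cast_le.mpr hkn) 1) hm

lemma no_second (hsym : ∀ a b : Site, J a b = J b a)
    (hJ : ∀ a b : Site, Adj a b → J a b ∈ Set.Icc (0:ℝ) 1) (hh : 1.5 < h)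
    (hseq : IsLegalFlipSeqDis J h η m)
    {z x0 : Site} {t n : ℕ}
    (hx0 : x0 ∈ nbrs z)
    (hlt : LegalDis J h (η t) z) (het : η (t+1) = flipAt (η t) z)
    (hzt : η t z = true) (hx0t : η t x0 = true)
    (htn : t < n) (hm : (n : ℕ∞) + 1 ≤ m)
    (hzn : η n z = true) (hfn : η (n+1) z ≠ η n z) : False := by
  obtain ⟨y1, y2, hp, hy1, hy2, hJJ⟩ := cflip_structure hJ hh hlt hzt hx0 hx0t
  -- the first flip of z after t
  set W := {k : ℕ | t < k ∧ η (k+1) z ≠ η k z} with hW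
  have hnW : n ∈ W := ⟨htn, hfn⟩
  have hWne : W.Nonempty := ⟨n, hnW⟩
  set w := sInf W with hwdef
  have hwW : w ∈ W := Nat.sInf_mem hWne
  have hwn : w ≤ n := Nat.sInf_le hnW
  have htw : t < w := hwW.1
  -- spins of z in (t, w] are false
  have hz_pre : ∀ k, t + 1 ≤ k → k ≤ w → η k z = false := by
    intro k hk1 hk2
    have : η k z = η (t+1) z := by
      apply persist
      · exact hk1
      · intro j hj hjk
        by_contra hflip
        have hjW : j ∈ W := ⟨by omega, hflip⟩
        have := Nat.sInf_le hjW
        omega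
    rw [this, het, flipAt_same, hzt]; rfl
  have hwz : η w z = false := hz_pre w (by omega) le_rfl
  have hwltn : w < n := by
    rcases lt_or_eq_of_le hwn with h' | h'
    · exact h'
    · exfalso; rw [h'] at hwz; rw [hwz] at hzn; exact Bool.false_ne_true hzn
  -- flip at w is at z, and legal
  obtain ⟨u, hlu, heu⟩ := hseq w (cast_step_le (by omega) hm)
  have huz : z = u := flip_site heu hwW.2
  subst huz
  have hSw : -h < Ssum J (η w) z := legal_S_gt hwz hlu
  -- main symmetric argument
  have main : ∀ ya yb : Site, (nbrs z).Perm [x0, ya, yb] →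
      h + J z x0 < J z ya + J z yb → η w ya = true → False := by
    intro ya yb hp' hJJ' hwa
    have hyam : ya ∈ nbrs z := hp'.mem_iff.mpr (by simp)
    have hybm : yb ∈ nbrs z := hp'.mem_iff.mpr (by simp)
    have hza : z ∈ nbrs ya := mem_nbrs_symm hyam
    have hya_ne : ya ≠ z := fun hq => self_not_mem_nbrs z (hq ▸ hyam)
    have hJ0 := hJ z x0 hx0
    have hJa := hJ z ya hyam
    have hJb := hJ z yb hybm
    have contra_z : ∀ k, η k z = true → η k ya = true → ¬ LegalDis J h (η k) z := by
      intro k hk1 hk2 hleg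
      have hS := legal_S_lt hk1 hleg
      rw [Ssum_perm hp', hk2, val_true, mul_one] at hS
      have t0 := (term_bounds hJ0.1 (η k x0)).1
      have tb := (term_bounds hJb.1 (η k yb)).1
      linarith [hJb.2]
    have contra_ya : ∀ k, η k z = true → η k ya = true → ¬ LegalDis J h (η k) ya := by
      intro k hkz hka hleg
      have hS := legal_S_lt hka hleg
      have hge := Ssum_ge_of_true_nbr hJ hza hkz
      rw [hsym ya z] at hge
      linarith [hJ0.1, hJb.2]
    have inv : ∀ k, w + 1 ≤ k → k ≤ n → η k z = true ∧ η k ya = true := by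
      intro k hk1
      induction k, hk1 using Nat.le_induction with
      | base =>
        intro _
        constructor
        · rw [heu, flipAt_same, hwz]; rfl
        · rw [heu, flipAt_other _ _ _ hya_ne]; exact hwa
      | succ k hk ih =>
        intro hkn
        obtain ⟨hkz, hka⟩ := ih (by omega)
        obtain ⟨u', hlu', heu'⟩ := hseq k (cast_step_le (by omega) hm)
        by_cases hu'z : u' = z
        · exact absurd hlu' (hu'z ▸ contra_z k hkz hka)
        · by_cases hu'a : u' = ya
          · exact absurd hlu' (hu'a ▸ contra_ya k hkz hka)
          · constructor
            · rw [heu', flipAt_other _ _ _ (fun hq => hu'z hq.symm)]; exact hkz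
            · rw [heu', flipAt_other _ _ _ (fun hq => hu'a hq.symm)]; exact hka
    obtain ⟨hnz', hna⟩ := inv n (by omega) le_rfl
    obtain ⟨u2, hlu2, heu2⟩ := hseq n hm
    have : z = u2 := flip_site heu2 hfn
    exact contra_z n hzn hna (this ▸ hlu2)
  -- case on which of y1, y2 is true at w
  by_cases hb1 : η w y1 = true
  · exact main y1 y2 hp hJJ hb1
  · by_cases hb2 : η w y2 = true
    · have hp2 : (nbrs z).Perm [x0, y2, y1] :=
        hp.trans (List.Perm.cons x0 (List.Perm.swap y2 y1 []))
      exact main y2 y1 hp2 (by linarith) hb2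
    · -- both false at w: contradiction with legality of the false→true flip at w
      have hb1' : η w y1 = false := by revert hb1; cases η w y1 <;> simp
      have hb2' : η w y2 = false := by revert hb2; cases η w y2 <;> simp
      have hSw' := hSw
      rw [Ssum_perm hp, hb1', hb2', val_false] at hSw'
      have hx0m := hJ z x0 hx0
      have t0 := (term_bounds hx0m.1 (η w x0)).2
      linarith

end Main
end Stmt5Aux

open Stmt5Aux

/-- in the disordered ferromagnet on ℍ with couplings J_{x,y} ∈ [0,1] and
external field h > 1.5, in every legal flip sequence (finite or infinite, from any initial
configuration `σ = η 0`) every site is flipped at most 7 times. -/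
theorem stmt5 (J : Site → Site → ℝ) (hsym : ∀ a b : Site, J a b = J b a)
    (hJ : ∀ a b : Site, Adj a b → J a b ∈ Set.Icc (0 : ℝ) 1)
    (h : ℝ) (hh : 1.5 < h)
    (σ : Config) (η : ℕ → Config) (m : ℕ∞) (h0 : η 0 = σ)
    (hseq : IsLegalFlipSeqDis J h η m) (x : Site) :
    {n : ℕ | (n : ℕ∞) + 1 ≤ m ∧ η (n + 1) x ≠ η n x}.encard ≤ 7 := by
  classical
  set E := {n : ℕ | (n : ℕ∞) + 1 ≤ m ∧ η (n + 1) x ≠ η n x} with hEdef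
  have hflipx : ∀ n ∈ E, LegalDis J h (η n) x ∧ η (n+1) = flipAt (η n) x := by
    intro n hn
    obtain ⟨u, hlu, heu⟩ := hseq n hn.1
    have hxu : x = u := flip_site heu hn.2
    subst hxu
    exact ⟨hlu, heu⟩
  have hmemE : ∀ {k q : ℕ}, q ∈ E → k < q → η (k+1) x ≠ η k x → k ∈ E := by
    intro k q hq hkq hflip
    exact ⟨cast_step_le hkq.le hq.1, hflip⟩
  have hconst : ∀ {w q : ℕ}, q ∈ E → (∀ e ∈ E, e < q → e ≤ w) →
      ∀ k, w+1 ≤ k → k ≤ q → η k x = η q x := by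
    intro w q hq hmax k hk1 hk2
    have h1 : η q x = η k x := by
      apply persist (η := η) x k q hk2
      intro j hj hjq
      by_contra hflip
      have hjE : j ∈ E := hmemE hq hjq hflip
      have := hmax j hjE hjq
      omega
    exact h1.symm
  set P := {n : ℕ | n ∈ E ∧ η n x = true} with hPdef
  set Q := {n : ℕ | n ∈ E ∧ η n x = false} with hQdef
  -- bound on P
  have hP3 : P.encard ≤ 3 := by
    rcases Set.eq_empty_or_nonempty P with hPe | hPne
    · rw [hPe]; simp
    · set p0 := sInf P with hp0def
      have hp0P : p0 ∈ P := Nat.sInf_mem hPne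
      have hp0E : p0 ∈ E := hp0P.1
      -- heavy neighbor
      obtain ⟨hl0, he0⟩ := hflipx p0 hp0E
      have hS0 : Ssum J (η p0) x < -h := legal_S_lt hp0P.2 hl0
      obtain ⟨ystar, hysm, hys⟩ := exists_heavy hJ hh hS0
      -- charge construction
      have hcharge : ∀ p ∈ P \ {p0}, ∃ z k, z ∈ nbrs x ∧ J x z < 2 - h ∧ k < p ∧
          (∀ e ∈ E, e < p → e < k) ∧ LegalDis J h (η k) z ∧ η (k+1) = flipAt (η k) z ∧
          η k z = true ∧ η k x = true ∧ x ∈ nbrs z := by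
        rintro p ⟨hpP, hpne⟩
        have hpne' : p ≠ p0 := by simpa using hpne
        have hpE : p ∈ E := hpP.1
        have hppos : p0 < p := (Nat.sInf_le hpP).lt_of_ne (fun hq => hpne' hq.symm)
        set w := sSup {e : ℕ | e ∈ E ∧ e < p} with hwdef
        have hbdd : BddAbove {e : ℕ | e ∈ E ∧ e < p} := ⟨p, fun a ha => ha.2.le⟩
        have hne : {e : ℕ | e ∈ E ∧ e < p}.Nonempty := ⟨p0, hp0E, hppos⟩
        have hwmem := Nat.sSup_mem hne hbdd
        have hwE : w ∈ E := hwmem.1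
        have hwp : w < p := hwmem.2
        have hmax : ∀ e ∈ E, e < p → e ≤ w := fun e he hlt => le_csSup hbdd ⟨he, hlt⟩
        have hxc : ∀ k, w+1 ≤ k → k ≤ p → η k x = η p x := hconst hpE hmax
        have hpx : η p x = true := hpP.2
        have hw1x : η (w+1) x = true := by rw [hxc (w+1) le_rfl (by omega), hpx]
        have hwx : η w x = false := by
          have hne2 := hwE.2
          revert hne2; rw [hw1x]; cases η w x <;> simp
        obtain ⟨hlw, hew⟩ := hflipx w hwE
        have hSw : -h < Ssum J (η w) x := legal_S_gt hwx hlw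
        have hSw1 : Ssum J (η (w+1)) x = Ssum J (η w) x := by
          apply Ssum_congr
          intro u hu
          rw [hew, flipAt_other _ _ _ (fun hq => self_not_mem_nbrs x (by rw [hq] at hu; exact hu))]
        obtain ⟨hlp, hep⟩ := hflipx p hpE
        have hSp : Ssum J (η p) x < -h := legal_S_lt hpx hlp
        have hex : ∃ k, w+1 ≤ k ∧ k < p ∧ Ssum J (η (k+1)) x < Ssum J (η k) x := by
          by_contra hno
          push_neg at hno
          have mono : ∀ k, w+1 ≤ k → k ≤ p → Ssum J (η (w+1)) x ≤ Ssum J (η k) x := by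
            intro k hk1
            induction k, hk1 using Nat.le_induction with
            | base => intro _; exact le_rfl
            | succ k hk ih =>
              intro hkp
              exact le_trans (ih (by omega)) (hno k hk (by omega))
          linarith [mono p (by omega) le_rfl]
        obtain ⟨k, hk1, hkp, hdec⟩ := hex
        obtain ⟨u, hlu, heu⟩ := hseq k (cast_step_le hkp.le hpE.1)
        have hux : u ∈ nbrs x := by
          by_contra hnu
          have heq : Ssum J (η (k+1)) x = Ssum J (η k) x := by
            apply Ssum_congr
            intro v hv
            rw [heu, flipAt_other _ _ _ (fun hq => hnu (by rw [hq] at hv; exact hv))]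
          linarith
        have hut : η k u = true := by
          by_contra hfu
          have hfu' : η k u = false := by revert hfu; cases η k u <;> simp
          have hmono := Ssum_flip_mono (J := J) hJ (σ := η k) (x := x) hfu'
          rw [← heu] at hmono
          linarith
        have hkx : η k x = true := by rw [hxc k (by omega) (by omega), hpx]
        have hxu : x ∈ nbrs u := mem_nbrs_symm hux
        obtain ⟨y1, y2, hp', hy1, hy2, hJJ⟩ := cflip_structure hJ hh hlu hut hxu hkx
        have hy1m : y1 ∈ nbrs u := hp'.mem_iff.mpr (by simp)
        have hy2m : y2 ∈ nbrs u := hp'.mem_iff.mpr (by simp)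
        have hJux : J x u < 2 - h := by
          rw [hsym x u]
          have hb1 := (hJ u y1 hy1m).2
          have hb2 := (hJ u y2 hy2m).2
          have hb0 := (hJ u x hxu).1
          linarith
        exact ⟨u, k, hux, hJux, hkp, fun e he hlt => by
          have := hmax e he hlt; omega, hlu, heu, hut, hkx, hxu⟩
      choose! f g hf1 hf2 hf3 hf4 hf5 hf6 hf7 hf8 hf9 using hcharge
      have key : ∀ p1 ∈ P \ {p0}, ∀ p2 ∈ P \ {p0}, p1 < p2 → f p1 = f p2 → False := by
        intro p1 h1 p2 h2 hlt12 hfe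
        have hgg : g p1 < g p2 := by
          have ha := hf4 p2 h2 p1 h1.1.1 hlt12
          have hb := hf3 p1 h1
          omega
        exact no_second hsym hJ hh hseq (hf9 p1 h1) (hf5 p1 h1) (hf6 p1 h1)
          (hf7 p1 h1) (hf8 p1 h1) hgg
          (cast_step_le (hf3 p2 h2).le h2.1.1.1)
          (by rw [hfe]; exact hf7 p2 h2)
          (by rw [hfe, hf6 p2 h2, flipAt_same]; exact not_not_flip _)
      have hinj : Set.InjOn f (P \ {p0}) := by
        intro p1 h1 p2 h2 hfe
        by_contra hne
        rcases lt_or_gt_of_ne hne with h' | h'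
        · exact key p1 h1 p2 h2 h' hfe
        · exact key p2 h2 p1 h1 h' hfe.symm
      have hmaps : ∀ p ∈ P \ {p0}, f p ∈ {z : Site | z ∈ nbrs x ∧ z ≠ ystar} := by
        intro p hp
        refine ⟨hf1 p hp, fun hq => ?_⟩
        have := hf2 p hp
        rw [hq] at this
        linarith
      have hT2 : ({z : Site | z ∈ nbrs x ∧ z ≠ ystar}).encard ≤ 2 := by
        have hl : nbrs x = [(x.1 - 1, x.2), (x.1 + 1, x.2),
            if Even (x.1 + x.2) then (x.1, x.2 + 1) else (x.1, x.2 - 1)] := rfl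
        set A := ((x.1 - 1 : ℤ), x.2)
        set B := ((x.1 + 1 : ℤ), x.2)
        set C := (if Even (x.1 + x.2) then ((x.1 : ℤ), x.2 + 1) else ((x.1 : ℤ), x.2 - 1))
        have hys3 : ystar = A ∨ ystar = B ∨ ystar = C := by
          have := hysm
          rw [hl] at this
          simpa using this
        have hpair : ∀ u v : Site, ({u, v} : Set Site).encard ≤ 2 := by
          intro u v
          refine le_trans (Set.encard_insert_le _ _) ?_
          rw [Set.encard_singleton]
          norm_num
        have hsub : ∀ u v : Site, (ystar = A ∨ ystar = B ∨ ystar = C) →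
            True := fun _ _ _ => trivial
        rcases hys3 with hy | hy | hy
        · refine le_trans (Set.encard_le_encard ?_) (hpair B C)
          rintro z ⟨hz, hzne⟩
          rw [hl] at hz
          simp only [List.mem_cons, List.not_mem_nil, or_false] at hz
          rcases hz with rfl | rfl | rfl
          · exact absurd hy.symm hzne
          · exact Or.inl rfl
          · exact Or.inr rfl
        · refine le_trans (Set.encard_le_encard ?_) (hpair A C)
          rintro z ⟨hz, hzne⟩
          rw [hl] at hz
          simp only [List.mem_cons, List.not_mem_nil, or_false] at hz
          rcases hz with rfl | rfl | rfl
          · exact Or.inl rfl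
          · exact absurd hy.symm hzne
          · exact Or.inr rfl
        · refine le_trans (Set.encard_le_encard ?_) (hpair A B)
          rintro z ⟨hz, hzne⟩
          rw [hl] at hz
          simp only [List.mem_cons, List.not_mem_nil, or_false] at hz
          rcases hz with rfl | rfl | rfl
          · exact Or.inl rfl
          · exact Or.inr rfl
          · exact absurd hy.symm hzne
      have hPd : (P \ {p0}).encard ≤ 2 := by
        rw [← hinj.encard_image]
        refine le_trans (Set.encard_le_encard ?_) hT2
        rintro _ ⟨p, hp, rfl⟩
        exact hmaps p hp
      have hsubP : P ⊆ (P \ {p0}) ∪ {p0} := by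
        intro a ha
        by_cases h' : a = p0
        · exact Or.inr (by simp [h'])
        · exact Or.inl ⟨ha, by simp [h']⟩
      calc P.encard ≤ ((P \ {p0}) ∪ {p0}).encard := Set.encard_le_encard hsubP
        _ ≤ (P \ {p0}).encard + ({p0} : Set ℕ).encard := Set.encard_union_le _ _
        _ ≤ 2 + 1 := by
            refine add_le_add hPd ?_
            rw [Set.encard_singleton]
        _ = 3 := by norm_num
  -- bound on Q
  have hQP : Q.encard ≤ P.encard + 1 := by
    rcases Set.eq_empty_or_nonempty Q with hQe | hQne
    · rw [hQe]; simp
    · set q0 := sInf Q with hq0def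
      have hq0Q : q0 ∈ Q := Nat.sInf_mem hQne
      have hpred : ∀ q ∈ Q \ {q0}, ∃ w, w ∈ P ∧ w < q ∧ ∀ e ∈ E, e < q → e ≤ w := by
        rintro q ⟨hqQ, hqne⟩
        have hqne' : q ≠ q0 := by simpa using hqne
        have hq0lt : q0 < q := (Nat.sInf_le hqQ).lt_of_ne (fun hq => hqne' hq.symm)
        set w := sSup {e : ℕ | e ∈ E ∧ e < q} with hwdef
        have hbdd : BddAbove {e : ℕ | e ∈ E ∧ e < q} := ⟨q, fun a ha => ha.2.le⟩
        have hne : {e : ℕ | e ∈ E ∧ e < q}.Nonempty := ⟨q0, hq0Q.1, hq0lt⟩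
        have hwmem := Nat.sSup_mem hne hbdd
        have hwE : w ∈ E := hwmem.1
        have hwq : w < q := hwmem.2
        have hmax : ∀ e ∈ E, e < q → e ≤ w := fun e he hlt => le_csSup hbdd ⟨he, hlt⟩
        have hxc : ∀ k, w+1 ≤ k → k ≤ q → η k x = η q x := hconst hqQ.1 hmax
        have hqx : η q x = false := hqQ.2
        have hw1x : η (w+1) x = false := by rw [hxc (w+1) le_rfl (by omega), hqx]
        have hwx : η w x = true := by
          have hne2 := hwE.2
          revert hne2; rw [hw1x]; cases η w x <;> simp
        exact ⟨w, ⟨hwE, hwx⟩, hwq, hmax⟩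
      choose! pr hpr1 hpr2 hpr3 using hpred
      have hinj : Set.InjOn pr (Q \ {q0}) := by
        intro a ha b hb he
        by_contra hne
        rcases lt_or_gt_of_ne hne with h' | h'
        · have h1 := hpr3 b hb a ha.1.1 h'
          have h2 := hpr2 a ha
          rw [← he] at h1
          omega
        · have h1 := hpr3 a ha b hb.1.1 h'
          have h2 := hpr2 b hb
          rw [he] at h1
          omega
      have hsubQ : Q ⊆ (Q \ {q0}) ∪ {q0} := by
        intro a ha
        by_cases h' : a = q0
        · exact Or.inr (by simp [h'])
        · exact Or.inl ⟨ha, by simp [h']⟩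
      calc Q.encard ≤ ((Q \ {q0}) ∪ {q0}).encard := Set.encard_le_encard hsubQ
        _ ≤ (Q \ {q0}).encard + ({q0} : Set ℕ).encard := Set.encard_union_le _ _
        _ ≤ P.encard + 1 := by
            refine add_le_add ?_ ?_
            · rw [← hinj.encard_image]
              refine Set.encard_le_encard ?_
              rintro _ ⟨q, hq, rfl⟩
              exact hpr1 q hq
            · rw [Set.encard_singleton]
  -- combine
  have hEPQ : E ⊆ P ∪ Q := by
    intro n hn
    cases hb : η n x
    · exact Or.inr ⟨hn, hb⟩
    · exact Or.inl ⟨hn, hb⟩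
  calc E.encard ≤ (P ∪ Q).encard := Set.encard_le_encard hEPQ
    _ ≤ P.encard + Q.encard := Set.encard_union_le _ _
    _ ≤ 3 + (3 + 1) := add_le_add hP3 (le_trans hQP (add_le_add_left hP3 1))
    _ = 7 := by norm_num
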